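/- arXiv:2604.24573 — 9 statements merged into one kernel-verified Lean document; each statement's English description precedes it below -/
import Mathlib

section
/- For a permutation w in S_n and any (k+1)-element increasing subset X = [x_1,...,x_{k+1}] of [n], the intersection of the packet P(X) with the set of k-inversions of w is one of: the empty set, a single element {X_i} for some i, a pair of consecutive elements {X_i, X_{i+1}} for some i, or the entire packet P(X). -/
/-- `X` (a strictly increasing `k`-tuple in `[n]`) is a `k`-inversion of `w`:
`w⁻¹` is strictly decreasing on its entries. -/
def IsKInv (n k : ℕ) (w : Equiv.Perm (Fin n)) (X : Fin k → Fin n) : Prop :=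
  StrictMono X ∧ ∀ i j : Fin k, i < j → w⁻¹ (X j) < w⁻¹ (X i)

private lemma key_lemma {n k : ℕ} (g : Fin (k + 1) → Fin n) {i j : Fin (k + 1)}
    (hij : i.val + 1 < j.val)
    (hi : ∀ a b : Fin k, a < b → g (i.succAbove b) < g (i.succAbove a))
    (hj : ∀ a b : Fin k, a < b → g (j.succAbove b) < g (j.succAbove a)) :
    ∀ a b : Fin (k + 1), a < b → g b < g a := by
  have avoid : ∀ (p : Fin (k + 1)),
      (∀ a b : Fin k, a < b → g (p.succAbove b) < g (p.succAbove a)) →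
      ∀ a b : Fin (k + 1), a ≠ p → b ≠ p → a < b → g b < g a := by
    intro p hp a b ha hb hab
    obtain ⟨a', rfl⟩ := Fin.exists_succAbove_eq ha
    obtain ⟨b', rfl⟩ := Fin.exists_succAbove_eq hb
    exact hp a' b' ((Fin.strictMono_succAbove p).lt_iff_lt.mp hab)
  intro a b hab
  by_cases hai : a = i
  · by_cases hbj : b = j
    · -- a = i, b = j : go through the middle m = i+1
      subst hai hbj
      have hm : a.val + 1 < k + 1 := by omega
      set m : Fin (k + 1) := ⟨a.val + 1, hm⟩ with hmdef
      have hmi : m ≠ a := by simp [hmdef, Fin.ext_iff]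
      have hmj : m ≠ b := by simp [hmdef, Fin.ext_iff]; omega
      have h1 : g b < g m := avoid a hi m b hmi
        (by intro h; rw [h] at hij; omega)
        (by rw [Fin.lt_def]; simp only [hmdef]; omega)
      have h2 : g m < g a := avoid b hj a m (by
        intro h; subst h; omega) hmj (by rw [Fin.lt_def]; simp only [hmdef]; omega)
      exact h1.trans h2
    · -- b ≠ j; a = i ≠ j since i < j
      have haj : a ≠ j := by subst hai; intro h; subst h; omega
      exact avoid j hj a b haj hbj hab
  · by_cases hbi : b = i
    · -- b = i, so a < i < j, both ≠ j
      have haj : a ≠ j := by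
        intro h; subst h hbi
        have := Fin.lt_def.mp hab; omega
      have hbj : b ≠ j := by subst hbi; intro h; subst h; omega
      exact avoid j hj a b haj hbj hab
    · exact avoid i hi a b hai hbi hab

/-- for a `(k+1)`-subset `X` of `[n]`, the intersection of the packet
`P(X) = {X ∘ succAbove i}` with `Inv_k(w)` is empty, a singleton, a consecutive pair,
or the whole packet. -/
theorem packet_intersection_cases (n k : ℕ) (w : Equiv.Perm (Fin n))
    (X : Fin (k + 1) → Fin n) (hX : StrictMono X) :
    ({Y | (∃ i : Fin (k + 1), Y = X ∘ Fin.succAbove i) ∧ IsKInv n k w Y} = (∅ : Set (Fin k → Fin n))) ∨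
    (∃ i : Fin (k + 1),
      {Y | (∃ i : Fin (k + 1), Y = X ∘ Fin.succAbove i) ∧ IsKInv n k w Y}
        = {X ∘ Fin.succAbove i}) ∨
    (∃ i : Fin k,
      {Y | (∃ i : Fin (k + 1), Y = X ∘ Fin.succAbove i) ∧ IsKInv n k w Y}
        = {X ∘ Fin.succAbove i.castSucc, X ∘ Fin.succAbove i.succ}) ∨
    ({Y | (∃ i : Fin (k + 1), Y = X ∘ Fin.succAbove i) ∧ IsKInv n k w Y}
        = {Y | ∃ i : Fin (k + 1), Y = X ∘ Fin.succAbove i}) := by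
  classical
  set g : Fin (k + 1) → Fin n := fun t => w⁻¹ (X t) with hg
  set P : Fin (k + 1) → Prop := fun i => IsKInv n k w (X ∘ Fin.succAbove i) with hP
  -- characterization of P
  have hPiff : ∀ i : Fin (k + 1),
      P i ↔ ∀ a b : Fin k, a < b → g (i.succAbove b) < g (i.succAbove a) := by
    intro i
    constructor
    · intro ⟨_, h⟩ a b hab; exact h a b hab
    · intro h
      exact ⟨hX.comp (Fin.strictMono_succAbove i), fun a b hab => h a b hab⟩
  -- membership characterization
  have hmem : ∀ Y, (Y ∈ {Y | (∃ i : Fin (k + 1), Y = X ∘ Fin.succAbove i) ∧ IsKInv n k w Y})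
      ↔ ∃ i : Fin (k + 1), Y = X ∘ Fin.succAbove i ∧ P i := by
    intro Y
    constructor
    · rintro ⟨⟨i, rfl⟩, hinv⟩; exact ⟨i, rfl, hinv⟩
    · rintro ⟨i, rfl, hp⟩; exact ⟨⟨i, rfl⟩, hp⟩
  by_cases hall : ∀ i, P i
  · right; right; right
    ext Y
    rw [hmem]
    constructor
    · rintro ⟨i, rfl, _⟩; exact ⟨i, rfl⟩
    · rintro ⟨i, rfl⟩; exact ⟨i, rfl, hall i⟩
  · -- not all; any two distinct elements of S are consecutive
    have hconsec : ∀ i j : Fin (k + 1), P i → P j → i < j → j.val = i.val + 1 := by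
      intro i j hi hj hij
      by_contra h
      have h2 : i.val + 1 < j.val := by
        have := Fin.lt_def.mp hij; omega
      have hanti := key_lemma g h2 ((hPiff i).mp hi) ((hPiff j).mp hj)
      exact hall (fun l => (hPiff l).mpr
        (fun a b hab => hanti _ _ ((Fin.strictMono_succAbove l) hab)))
    by_cases hex : ∃ i, P i
    · -- take a minimal element
      obtain ⟨i, hi⟩ := hex
      obtain ⟨i0, hi0P, hi0min⟩ : ∃ i0, P i0 ∧ ∀ j, P j → i0 ≤ j := by
        have hne : (Finset.univ.filter P).Nonempty := ⟨i, by simp [hi]⟩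
        refine ⟨(Finset.univ.filter P).min' hne, ?_, ?_⟩
        · have := Finset.min'_mem _ hne; simpa using this
        · intro j hj; exact Finset.min'_le _ _ (by simp [hj])
      by_cases hpair : ∃ j, P j ∧ j ≠ i0
      · obtain ⟨j, hjP, hjne⟩ := hpair
        have hlt : i0 < j := lt_of_le_of_ne (hi0min j hjP) (Ne.symm hjne)
        have hjv : j.val = i0.val + 1 := hconsec i0 j hi0P hjP hlt
        have hi0k : i0.val < k := by omega
        right; right; left
        refine ⟨⟨i0.val, hi0k⟩, ?_⟩
        have hcast : (Fin.castSucc (⟨i0.val, hi0k⟩ : Fin k)) = i0 := by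
          simp [Fin.ext_iff]
        have hsucc : (Fin.succ (⟨i0.val, hi0k⟩ : Fin k)) = j := by
          simp [Fin.ext_iff, hjv]
        rw [hcast, hsucc]
        ext Y
        rw [hmem]
        constructor
        · rintro ⟨l, rfl, hl⟩
          rcases eq_or_ne l i0 with rfl | hne
          · left; rfl
          · have hlt2 : i0 < l := lt_of_le_of_ne (hi0min l hl) (Ne.symm hne)
            have : l.val = i0.val + 1 := hconsec i0 l hi0P hl hlt2
            have : l = j := by rw [Fin.ext_iff, this, hjv]
            subst this; right; rfl
        · rintro (rfl | rfl)
          · exact ⟨i0, rfl, hi0P⟩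
          · exact ⟨j, rfl, hjP⟩
      · right; left
        refine ⟨i0, ?_⟩
        ext Y
        rw [hmem]
        constructor
        · rintro ⟨l, rfl, hl⟩
          have : l = i0 := by
            by_contra hne; exact hpair ⟨l, hl, hne⟩
          subst this; rfl
        · rintro rfl; exact ⟨i0, rfl, hi0P⟩
    · left
      ext Y
      rw [hmem]
      simp only [Set.mem_empty_iff_false, iff_false]
      rintro ⟨l, _, hl⟩
      exact hex ⟨l, hl⟩
end

section
/- For a permutation w in S_n, if X = [x_1,...,x_k] is a k-quasi-inversion of w (all but exactly one of the pairs [x_i,x_j] with i<j are 2-inversions of w), then the intersection of the packet P(X) with the set of (k-1)-inversions of w equals {X_i, X_{i+1}} for some i in [k-1]. -/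
/-- `X` is a `k`-quasi-inversion of `w`: all but exactly one of the pairs of its
entries are 2-inversions of `w`. -/
def IsKQuasiInv (n k : ℕ) (w : Equiv.Perm (Fin n)) (X : Fin k → Fin n) : Prop :=
  StrictMono X ∧
    ∃! p : Fin k × Fin k, p.1 < p.2 ∧ ¬ w⁻¹ (X p.2) < w⁻¹ (X p.1)

/-- if `X` is a `(k+1)`-quasi-inversion of `w`, then the intersection of the
packet `P(X)` with `Inv_k(w)` is `{X_i, X_{i+1}}` for some consecutive pair of indices. -/
theorem quasiInv_packet_intersection (n k : ℕ) (w : Equiv.Perm (Fin n))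
    (X : Fin (k + 1) → Fin n) (hX : IsKQuasiInv n (k + 1) w X) :
    ∃ i : Fin k,
      {Y | (∃ j : Fin (k + 1), Y = X ∘ Fin.succAbove j) ∧ IsKInv n k w Y}
        = {X ∘ Fin.succAbove i.castSucc, X ∘ Fin.succAbove i.succ} := by
  obtain ⟨hmono, ⟨⟨a, b⟩, ⟨hab, hbad⟩, huniq⟩⟩ := hX
  have hgood : ∀ p q : Fin (k + 1), p < q → ((p, q) ≠ (a, b)) →
      w⁻¹ (X q) < w⁻¹ (X p) := by
    intro p q hpq hne
    by_contra h
    exact hne (huniq (p, q) ⟨hpq, h⟩)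
  -- b = a + 1
  have hconsec : b.val = a.val + 1 := by
    by_contra h
    have hab' : a.val < b.val := hab
    have h1 : a.val + 1 < b.val := by omega
    set c : Fin (k + 1) := ⟨a.val + 1, by omega⟩ with hc
    have hac : a < c := by simp [Fin.lt_def, hc]
    have hcb : c < b := by simp [Fin.lt_def, hc]; omega
    have h2 := hgood a c hac (by
      intro he
      have : c = b := (Prod.mk.injEq _ _ _ _ ▸ he).2
      exact absurd (congrArg Fin.val this) (by simp [hc]; omega))
    have h3 := hgood c b hcb (by
      intro he
      have : c = a := (Prod.mk.injEq _ _ _ _ ▸ he).1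
      exact absurd (congrArg Fin.val this) (by simp [hc]))
    exact hbad (h3.trans h2)
  have hblt : b.val < k + 1 := b.isLt
  refine ⟨⟨a.val, by omega⟩, ?_⟩
  have hia : (⟨a.val, by omega⟩ : Fin k).castSucc = a := by ext; simp
  have hib : (⟨a.val, by omega⟩ : Fin k).succ = b := by ext; simp [hconsec]
  have key : ∀ j : Fin (k + 1), IsKInv n k w (X ∘ Fin.succAbove j) ↔ (j = a ∨ j = b) := by
    intro j
    constructor
    · rintro ⟨-, hinv⟩
      by_contra hj
      push_neg at hj
      obtain ⟨hja, hjb⟩ := hj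
      obtain ⟨p, hp⟩ := Fin.exists_succAbove_eq (Ne.symm hja)
      obtain ⟨q, hq⟩ := Fin.exists_succAbove_eq (Ne.symm hjb)
      have hpq : p < q := by
        have := hab
        rw [← hp, ← hq] at this
        exact (Fin.succAbove_lt_succAbove_iff).mp this
      have := hinv p q hpq
      simp only [Function.comp_apply, hp, hq] at this
      exact hbad this
    · intro hj
      refine ⟨hmono.comp (Fin.strictMono_succAbove j), ?_⟩
      intro p q hpq
      simp only [Function.comp_apply]
      apply hgood _ _ ((Fin.succAbove_lt_succAbove_iff).mpr hpq)
      rcases hj with rfl | rfl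
      · intro he
        exact Fin.succAbove_ne j p (Prod.mk.injEq _ _ _ _ ▸ he).1
      · intro he
        exact Fin.succAbove_ne j q (Prod.mk.injEq _ _ _ _ ▸ he).2
  ext Y
  simp only [Set.mem_setOf_eq, Set.mem_insert_iff, Set.mem_singleton_iff]
  constructor
  · rintro ⟨⟨j, rfl⟩, hk⟩
    rcases (key j).mp hk with rfl | rfl
    · left; rw [hia]
    · right; rw [hib]
  · rintro (rfl | rfl)
    · exact ⟨⟨_, rfl⟩, (key _).mpr (Or.inl hia)⟩
    · exact ⟨⟨_, rfl⟩, (key _).mpr (Or.inr hib)⟩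
end

section
/- For w in S_n, the relation on k-inversions of w generated by the quasi-inversion relations is antisymmetric; that is, the permanent poset P_w(n,k) is a partial order. -/
/-- The quasi-inversion relations generating the permanent poset `P_w(n,k)`:
for a `(k+1)`-quasi-inversion `X` with `P(X) ∩ Inv_k(w) = {X_i, X_{i+1}}`
(here `i` is 1-based, encoded by `i : Fin k` with value `i+1`), relate
`X_i < X_{i+1}` when `k - i` is odd and `X_{i+1} < X_i` when `k - i` is even. -/
def QuasiRel (n k : ℕ) (w : Equiv.Perm (Fin n)) (A B : Fin k → Fin n) : Prop :=
  ∃ (X : Fin (k + 1) → Fin n) (i : Fin k),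
    IsKQuasiInv n (k + 1) w X ∧
    (∀ j : Fin (k + 1), IsKInv n k w (X ∘ Fin.succAbove j) ↔ (j = i.castSucc ∨ j = i.succ)) ∧
    ((Odd (k - (i.1 + 1)) ∧ A = X ∘ Fin.succAbove i.castSucc ∧ B = X ∘ Fin.succAbove i.succ) ∨
     (Even (k - (i.1 + 1)) ∧ A = X ∘ Fin.succAbove i.succ ∧ B = X ∘ Fin.succAbove i.castSucc))


/-- Signed statistic that strictly increases along `QuasiRel`. -/
def fstat (n k : ℕ) (Y : Fin k → Fin n) : ℤ :=
  ∑ j : Fin k, (-1 : ℤ) ^ (k - (j.1 + 1)) * (Y j : ℤ)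

lemma succAbove_eq_of_ne {k : ℕ} (i j : Fin k) (h : j ≠ i) :
    (i.castSucc).succAbove j = (i.succ).succAbove j := by
  rcases lt_or_gt_of_ne h with hlt | hgt
  · rw [Fin.succAbove_of_castSucc_lt _ _ (by simpa using hlt),
      Fin.succAbove_of_castSucc_lt _ _ (by simpa using hlt.le)]
  · rw [Fin.succAbove_of_le_castSucc _ _ (by simpa using hgt.le),
      Fin.succAbove_of_le_castSucc _ _ (by simpa using hgt)]

lemma fstat_lt_of_quasiRel {n k : ℕ} {w : Equiv.Perm (Fin n)} {A B : Fin k → Fin n}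
    (h : QuasiRel n k w A B) : fstat n k A < fstat n k B := by
  obtain ⟨X, i, hX, -, h3⟩ := h
  have hmono := hX.1
  have hlt : X i.castSucc < X i.succ := hmono (Fin.castSucc_lt_succ (i := i))
  have hne : ∀ j : Fin k, j ≠ i → A j = B j := by
    intro j hj
    rcases h3 with ⟨-, hA, hB⟩ | ⟨-, hA, hB⟩ <;>
      simp [hA, hB, Function.comp, succAbove_eq_of_ne i j hj]
  have hdiff : fstat n k B - fstat n k A
      = (-1 : ℤ) ^ (k - (i.1 + 1)) * ((B i : ℤ) - (A i : ℤ)) := by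
    unfold fstat
    rw [← Finset.sum_sub_distrib, Finset.sum_eq_single i]
    · ring
    · intro j _ hj; rw [hne j hj]; ring
    · simp
  rcases h3 with ⟨hodd, hA, hB⟩ | ⟨heven, hA, hB⟩
  · have hAi : A i = X i.succ := by simp [hA, Function.comp]
    have hBi : B i = X i.castSucc := by simp [hB, Function.comp]
    rw [hodd.neg_one_pow, hAi, hBi] at hdiff
    have : (X i.castSucc : ℤ) < (X i.succ : ℤ) := by exact_mod_cast hlt
    omega
  · have hAi : A i = X i.castSucc := by simp [hA, Function.comp]
    have hBi : B i = X i.succ := by simp [hB, Function.comp]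
    rw [heven.neg_one_pow, hAi, hBi] at hdiff
    have : (X i.castSucc : ℤ) < (X i.succ : ℤ) := by exact_mod_cast hlt
    omega

lemma fstat_le_of_rtg {n k : ℕ} {w : Equiv.Perm (Fin n)} {A B : Fin k → Fin n}
    (h : Relation.ReflTransGen (QuasiRel n k w) A B) : fstat n k A ≤ fstat n k B := by
  induction h with
  | refl => exact le_refl _
  | tail _ hq ih => exact ih.trans (fstat_lt_of_quasiRel hq).le

/-- the relation on `Inv_k(w)` generated by the quasi-inversion relations is
antisymmetric, i.e. the permanent poset `P_w(n,k)` is a partial order. -/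
theorem permanentPoset_antisymm (n k : ℕ) (w : Equiv.Perm (Fin n))
    (A B : Fin k → Fin n) (hA : IsKInv n k w A) (hB : IsKInv n k w B)
    (hAB : Relation.ReflTransGen (QuasiRel n k w) A B)
    (hBA : Relation.ReflTransGen (QuasiRel n k w) B A) :
    A = B := by
  rcases hAB.cases_head with rfl | ⟨c, hAc, hcB⟩
  · rfl
  · have h1 := fstat_lt_of_quasiRel hAc
    have h2 := fstat_le_of_rtg hcB
    have h3 := fstat_le_of_rtg hBA
    omega
end

section
/- For w in S_n and any (k+1)-inversion X of w, the k+1 elements of the packet P(X) form an antichain in the permanent poset P_w(n,k). -/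
namespace PacketAux

lemma succAbove_val {k : ℕ} (p : Fin (k+1)) (i : Fin k) :
    ((p.succAbove i : Fin (k+1)) : ℕ) = if i.1 < p.1 then i.1 else i.1 + 1 := by
  rcases lt_or_ge i.castSucc p with h | h
  · rw [Fin.succAbove_of_castSucc_lt _ _ h]
    have hv : i.1 < p.1 := h
    simp [hv]
  · rw [Fin.succAbove_of_le_castSucc _ _ h]
    have hv : ¬ i.1 < p.1 := by
      have : p.1 ≤ i.1 := h
      omega
    simp [hv]

variable {n k : ℕ} {w : Equiv.Perm (Fin n)}

lemma step {A B : Fin k → Fin n} (h : QuasiRel n k w A B) :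
    ∃ i : Fin k, (∀ j, j ≠ i → A j = B j) ∧
      ((Even (k - (i.1 + 1)) ∧ A i < B i ∧ w⁻¹ (A i) < w⁻¹ (B i)) ∨
       (Odd (k - (i.1 + 1)) ∧ B i < A i ∧ w⁻¹ (B i) < w⁻¹ (A i))) := by
  obtain ⟨X, i, ⟨hmono, hex⟩, hpac, hor⟩ := h
  obtain ⟨p, ⟨hplt, hpbad⟩, -⟩ := hex
  have hmem : ∀ m : Fin (k+1), IsKInv n k w (X ∘ Fin.succAbove m) → m = p.1 ∨ m = p.2 := by
    intro m hm
    by_contra hc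
    push_neg at hc
    obtain ⟨q1, hq1⟩ := Fin.exists_succAbove_eq (Ne.symm hc.1)
    obtain ⟨q2, hq2⟩ := Fin.exists_succAbove_eq (Ne.symm hc.2)
    have hq : q1 < q2 := by
      have h' : Fin.succAbove m q1 < Fin.succAbove m q2 := by rw [hq1, hq2]; exact hplt
      exact Fin.succAbove_lt_succAbove_iff.mp h'
    have h2 := hm.2 q1 q2 hq
    simp only [Function.comp_apply] at h2
    rw [hq1, hq2] at h2
    exact hpbad h2
  have h1 := hmem i.castSucc ((hpac i.castSucc).mpr (Or.inl rfl))
  have h2 := hmem i.succ ((hpac i.succ).mpr (Or.inr rfl))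
  have hcs : i.castSucc < i.succ := Fin.castSucc_lt_succ
  have hps : p.1 = i.castSucc ∧ p.2 = i.succ := by
    rcases h1 with h1 | h1 <;> rcases h2 with h2 | h2
    · exact absurd (h1.trans h2.symm) (ne_of_lt hcs)
    · exact ⟨h1.symm, h2.symm⟩
    · exfalso
      have : i.succ < i.castSucc := by rw [h1, h2]; exact hplt
      exact absurd hcs (not_lt.mpr (le_of_lt this))
    · exact absurd (h1.trans h2.symm) (ne_of_lt hcs)
  rw [hps.1, hps.2] at hpbad
  have hXlt : X i.castSucc < X i.succ := hmono hcs
  have hbad' : w⁻¹ (X i.castSucc) < w⁻¹ (X i.succ) := by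
    rcases lt_trichotomy (w⁻¹ (X i.castSucc)) (w⁻¹ (X i.succ)) with h' | h' | h'
    · exact h'
    · exact absurd (hmono.injective (w⁻¹.injective h')) (ne_of_lt hcs)
    · exact absurd h' hpbad
  have hsa : ∀ j : Fin k, j ≠ i →
      Fin.succAbove i.castSucc j = Fin.succAbove i.succ j := by
    intro j hj
    have hne : j.1 ≠ i.1 := fun h' => hj (Fin.ext h')
    apply Fin.ext
    rw [succAbove_val, succAbove_val]
    simp only [Fin.coe_castSucc, Fin.val_succ]
    split_ifs <;> omega
  have hcs_at : Fin.succAbove i.castSucc i = i.succ := by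
    apply Fin.ext
    rw [succAbove_val]
    simp
  have hsc_at : Fin.succAbove i.succ i = i.castSucc := by
    apply Fin.ext
    rw [succAbove_val]
    simp
  refine ⟨i, ?_, ?_⟩
  · intro j hj
    rcases hor with ⟨_, hA, hB⟩ | ⟨_, hA, hB⟩ <;>
      simp only [hA, hB, Function.comp_apply, hsa j hj]
  · rcases hor with ⟨hodd, hA, hB⟩ | ⟨heven, hA, hB⟩
    · right
      simp only [hA, hB, Function.comp_apply, hcs_at, hsc_at]
      exact ⟨hodd, hXlt, hbad'⟩
    · left
      simp only [hA, hB, Function.comp_apply, hcs_at, hsc_at]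
      exact ⟨heven, hXlt, hbad'⟩



variable {n k : ℕ} {w : Equiv.Perm (Fin n)}

def S (φ : Fin n → ℤ) (A : Fin k → Fin n) : ℤ :=
  ∑ j : Fin k, (-1 : ℤ) ^ (k - (j.1 + 1)) * φ (A j)

lemma S_mono_step (φ : Fin n → ℤ)
    (hφ : ∀ x y : Fin n, x < y → w⁻¹ x < w⁻¹ y → φ x ≤ φ y)
    {A B : Fin k → Fin n} (h : QuasiRel n k w A B) : S φ A ≤ S φ B := by
  obtain ⟨i, hagree, hor⟩ := step h
  have hsum : S φ B - S φ A
      = ∑ j : Fin k, (-1 : ℤ) ^ (k - (j.1 + 1)) * (φ (B j) - φ (A j)) := by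
    unfold S
    rw [← Finset.sum_sub_distrib]
    apply Finset.sum_congr rfl
    intro j _
    ring
  have hone : S φ B - S φ A = (-1 : ℤ) ^ (k - (i.1 + 1)) * (φ (B i) - φ (A i)) := by
    rw [hsum, Finset.sum_eq_single i]
    · intro j _ hj
      rw [hagree j hj]
      ring
    · intro h'
      exact absurd (Finset.mem_univ i) h'
  rcases hor with ⟨he, hlt, hwlt⟩ | ⟨ho, hlt, hwlt⟩
  · rw [he.neg_one_pow] at hone
    have := hφ _ _ hlt hwlt
    linarith
  · rw [ho.neg_one_pow] at hone
    have := hφ _ _ hlt hwlt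
    linarith

lemma S_mono (φ : Fin n → ℤ)
    (hφ : ∀ x y : Fin n, x < y → w⁻¹ x < w⁻¹ y → φ x ≤ φ y)
    {A B : Fin k → Fin n} (h : Relation.TransGen (QuasiRel n k w) A B) :
    S φ A ≤ S φ B := by
  induction h with
  | single h => exact S_mono_step φ hφ h
  | tail _ h ih => exact le_trans ih (S_mono_step φ hφ h)



variable {n k : ℕ} {w : Equiv.Perm (Fin n)}

lemma S_diff {X : Fin (k+1) → Fin n} (a b : Fin (k+1)) (hab : a < b)
    (φ : Fin n → ℤ) (g : ℕ → ℤ) (hg : ∀ l : Fin (k+1), φ (X l) = g l.1)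
    (hstep : ∀ m : ℕ, a.1 ≤ m → m + 1 < b.1 → g (m + 1) = g m) :
    S φ (X ∘ Fin.succAbove a) - S φ (X ∘ Fin.succAbove b)
      = (-1 : ℤ) ^ (k - b.1) * (g b.1 - g (b.1 - 1)) := by
  have hb1 : 1 ≤ b.1 := by
    have : a.1 < b.1 := hab
    omega
  have hbk : b.1 ≤ k := by omega
  have haltb : a.1 < b.1 := hab
  set i0 : Fin k := ⟨b.1 - 1, by omega⟩ with hi0
  have hsum : S φ (X ∘ Fin.succAbove a) - S φ (X ∘ Fin.succAbove b)
      = ∑ j : Fin k, (-1 : ℤ) ^ (k - (j.1 + 1)) *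
          (g ((Fin.succAbove a j) : ℕ) - g ((Fin.succAbove b j) : ℕ)) := by
    unfold S
    rw [← Finset.sum_sub_distrib]
    apply Finset.sum_congr rfl
    intro j _
    simp only [Function.comp_apply, hg]
    ring
  rw [hsum, Finset.sum_eq_single i0]
  · have hva : ((Fin.succAbove a i0) : ℕ) = b.1 := by
      rw [succAbove_val]
      have : ¬ i0.1 < a.1 := by simp [hi0]; omega
      rw [if_neg this]
      show b.1 - 1 + 1 = b.1; omega
    have hvb : ((Fin.succAbove b i0) : ℕ) = b.1 - 1 := by
      rw [succAbove_val]
      have : i0.1 < b.1 := by show b.1 - 1 < b.1; omega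
      exact if_pos this
    rw [hva, hvb]
    have : k - (i0.1 + 1) = k - b.1 := by simp [hi0]; omega
    rw [this]
  · intro j _ hj
    have hjv : j.1 ≠ b.1 - 1 := fun h' => hj (Fin.ext (by simp [hi0, h']))
    have hva := succAbove_val a j
    have hvb := succAbove_val b j
    rcases lt_or_ge j.1 a.1 with h' | h'
    · rw [hva, hvb, if_pos h', if_pos (by omega)]
      ring
    · rcases lt_or_ge j.1 b.1 with h'' | h''
      · rw [hva, hvb, if_neg (by omega), if_pos h'', hstep j.1 h' (by omega)]
        ring
      · rw [hva, hvb, if_neg (by omega), if_neg (by omega)]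
        ring
  · intro h'
    exact absurd (Finset.mem_univ i0) h'

lemma no_chain {X : Fin (k+1) → Fin n} (hX : IsKInv n (k+1) w X)
    (a b : Fin (k+1)) (hab : a < b) :
    ¬ Relation.TransGen (QuasiRel n k w) (X ∘ Fin.succAbove a) (X ∘ Fin.succAbove b) ∧
    ¬ Relation.TransGen (QuasiRel n k w) (X ∘ Fin.succAbove b) (X ∘ Fin.succAbove a) := by
  have hb1 : 1 ≤ b.1 := by
    have : a.1 < b.1 := hab
    omega
  set bp : Fin (k+1) := ⟨b.1 - 1, by omega⟩ with hbp
  set φ : Fin n → ℤ := fun x => if X b ≤ x then 1 else 0 with hφdef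
  set ψ : Fin n → ℤ := fun x => if w⁻¹ (X bp) ≤ w⁻¹ x then 1 else 0 with hψdef
  have hφ : ∀ x y : Fin n, x < y → w⁻¹ x < w⁻¹ y → φ x ≤ φ y := by
    intro x y hxy _
    simp only [hφdef]
    split_ifs with h1 h2
    · exact le_refl 1
    · exact absurd (le_trans h1 hxy.le) h2
    · norm_num
    · exact le_refl 0
  have hψ : ∀ x y : Fin n, x < y → w⁻¹ x < w⁻¹ y → ψ x ≤ ψ y := by
    intro x y _ hwxy
    simp only [hψdef]
    split_ifs with h1 h2
    · exact le_refl 1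
    · exact absurd (le_trans h1 hwxy.le) h2
    · norm_num
    · exact le_refl 0
  have hanti : StrictAnti (fun l : Fin (k+1) => w⁻¹ (X l)) := fun i j hij => hX.2 i j hij
  have hgφ : ∀ l : Fin (k+1), φ (X l) = (fun m => if b.1 ≤ m then (1:ℤ) else 0) l.1 := by
    intro l
    have h' : X b ≤ X l ↔ b.1 ≤ l.1 := hX.1.le_iff_le
    simp only [hφdef, h']
  have hgψ : ∀ l : Fin (k+1), ψ (X l) = (fun m => if m ≤ b.1 - 1 then (1:ℤ) else 0) l.1 := by
    intro l
    have h' : w⁻¹ (X bp) ≤ w⁻¹ (X l) ↔ l.1 ≤ b.1 - 1 := by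
      rw [hanti.le_iff_ge]
      exact Fin.le_def
    simp only [hψdef, h']
  have dφ := S_diff (X := X) a b hab φ (fun m => if b.1 ≤ m then (1:ℤ) else 0) hgφ (fun m hm hm2 => by split_ifs <;> omega)
  have dψ := S_diff (X := X) a b hab ψ (fun m => if m ≤ b.1 - 1 then (1:ℤ) else 0) hgψ (fun m hm hm2 => by split_ifs <;> omega)
  have hdφ : S φ (X ∘ Fin.succAbove a) - S φ (X ∘ Fin.succAbove b)
      = (-1:ℤ)^(k - b.1) := by
    rw [dφ]
    rw [if_pos (le_refl b.1), if_neg (by omega)]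
    ring
  have hdψ : S ψ (X ∘ Fin.succAbove a) - S ψ (X ∘ Fin.succAbove b)
      = -(-1:ℤ)^(k - b.1) := by
    rw [dψ]
    rw [if_neg (by omega : ¬ b.1 ≤ b.1 - 1), if_pos (le_refl _)]
    ring
  constructor <;> intro hT
  · have h1 := S_mono φ hφ hT
    have h2 := S_mono ψ hψ hT
    rcases Nat.even_or_odd (k - b.1) with hp | hp
    · rw [hp.neg_one_pow] at hdφ; linarith
    · rw [hp.neg_one_pow] at hdψ; linarith
  · have h1 := S_mono φ hφ hT
    have h2 := S_mono ψ hψ hT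
    rcases Nat.even_or_odd (k - b.1) with hp | hp
    · rw [hp.neg_one_pow] at hdψ; linarith
    · rw [hp.neg_one_pow] at hdφ; linarith

end PacketAux

/-- for a `(k+1)`-inversion `X` of `w`, the `k+1` elements of the packet
`P(X)` form an antichain in the permanent poset `P_w(n,k)` (whose strict order is the
transitive closure of the quasi-inversion relations). -/
theorem packet_antichain (n k : ℕ) (w : Equiv.Perm (Fin n))
    (X : Fin (k + 1) → Fin n) (hX : IsKInv n (k + 1) w X) :
    ∀ i j : Fin (k + 1), i ≠ j →
      ¬ Relation.TransGen (QuasiRel n k w) (X ∘ Fin.succAbove i) (X ∘ Fin.succAbove j) := by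
  intro i j hij hT
  rcases lt_or_gt_of_ne hij with h | h
  · exact (PacketAux.no_chain hX i j h).1 hT
  · exact (PacketAux.no_chain hX j i h).2 hT
end

section
/- For an affine permutation w in the affine symmetric group on n letters, if ρ is an admissible order (reflection order) of Inv_2(w) and [x,y], [x,y+n] are both 2-inversions of w, then [x,y] appears before [x,y+n] in ρ. -/
/-- The affine simple transposition `s_i` (index mod `n`) as a function `ℤ → ℤ`:
it swaps `x` and `x+1` for every `x ≡ i (mod n)`. -/
def affS (n : ℕ) (i : ZMod n) : ℤ → ℤ := fun x =>
  if (x : ZMod n) = i then x + 1 else if (x : ZMod n) = i + 1 then x - 1 else x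

/-- The function `s_{i_1} ∘ s_{i_2} ∘ ⋯ ∘ s_{i_ℓ}` associated to the word `L = i_1 ⋯ i_ℓ`. -/
def wordFun (n : ℕ) (L : List (ZMod n)) : ℤ → ℤ :=
  (L.map (affS n)).foldr (· ∘ ·) id

/-- `L` is a reduced word for `f`: its product is `f` and it has minimal length
among all words with product `f`. -/
def IsReducedWord (n : ℕ) (f : ℤ → ℤ) (L : List (ZMod n)) : Prop :=
  wordFun n L = f ∧ ∀ M : List (ZMod n), wordFun n M = f → L.length ≤ M.length

/-- `f` is an affine permutation in the affine symmetric group on `n` letters. -/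
def IsAffinePerm (n : ℕ) (f : ℤ → ℤ) : Prop :=
  Function.Bijective f ∧ (∀ x : ℤ, f (x + n) = f x + n) ∧
    (∑ i ∈ Finset.Icc (1 : ℤ) (n : ℤ), f i) = n * (n + 1) / 2

/-- The `j`-th entry (0-based) of the reflection order of the word `L`:
`ρ_j = (w⁽ʲ⁾(i_j), w⁽ʲ⁾(i_j + 1))` where `w⁽ʲ⁾ = s_{i_1} ⋯ s_{i_{j-1}}`. -/
def reflEntry (n : ℕ) (L : List (ZMod n)) (j : ℕ) : ℤ × ℤ :=
  (wordFun n (L.take j) ((L.getD j 0).val : ℤ),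
   wordFun n (L.take j) (((L.getD j 0).val : ℤ) + 1))

section
variable {n : ℕ}

lemma zmodOneNeZero (hn : 2 ≤ n) : (1 : ZMod n) ≠ 0 := by
  haveI : Fact (1 < n) := ⟨hn⟩
  exact one_ne_zero

lemma cast_eq_shift [NeZero n] {A B : ℤ} (h : (A : ZMod n) = B) : ∃ m : ℤ, A = B + m * n := by
  rw [ZMod.intCast_eq_intCast_iff] at h
  obtain ⟨m, hm⟩ := h.dvd
  exact ⟨-m, by linarith⟩

lemma affS_apply_eq1 {c : ZMod n} {z : ℤ} (h : (z : ZMod n) = c) : affS n c z = z + 1 := by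
  simp [affS, h]

lemma affS_apply_eq2' {c : ZMod n} {z : ℤ} (h1 : (z : ZMod n) ≠ c)
    (h : (z : ZMod n) = c + 1) : affS n c z = z - 1 := by
  unfold affS
  rw [if_neg h1, if_pos h]

lemma affS_apply_eq2 (hn : 2 ≤ n) {c : ZMod n} {z : ℤ} (h : (z : ZMod n) = c + 1) :
    affS n c z = z - 1 := by
  have hne : (z : ZMod n) ≠ c := by
    rw [h]; intro hc
    exact zmodOneNeZero hn (by linear_combination hc)
  exact affS_apply_eq2' hne h

lemma affS_apply_eq3 {c : ZMod n} {z : ℤ} (h1 : (z : ZMod n) ≠ c) (h2 : (z : ZMod n) ≠ c + 1) :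
    affS n c z = z := by
  simp [affS, h1, h2]

lemma affS_invol (hn : 2 ≤ n) (c : ZMod n) (z : ℤ) : affS n c (affS n c z) = z := by
  by_cases h1 : (z : ZMod n) = c
  · rw [affS_apply_eq1 h1, affS_apply_eq2 hn (by push_cast [h1]; ring)]
    ring
  · by_cases h2 : (z : ZMod n) = c + 1
    · rw [affS_apply_eq2 hn h2, affS_apply_eq1 (by push_cast [h2]; ring)]
      ring
    · rw [affS_apply_eq3 h1 h2, affS_apply_eq3 h1 h2]

lemma affS_inj (hn : 2 ≤ n) (c : ZMod n) : Function.Injective (affS n c) := by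
  intro a b h
  have := affS_invol hn c a
  rw [h, affS_invol hn c b] at this
  omega

lemma affS_shift (c : ZMod n) (m z : ℤ) : affS n c (z + m * n) = affS n c z + m * n := by
  have hc : ((z + m * n : ℤ) : ZMod n) = (z : ZMod n) := by
    push_cast
    simp
  by_cases h1 : (z : ZMod n) = c
  · rw [affS_apply_eq1 (hc.trans h1), affS_apply_eq1 h1]; ring
  · by_cases h2 : (z : ZMod n) = c + 1
    · rw [affS_apply_eq2' (hc ▸ h1) (hc.trans h2), affS_apply_eq2' h1 h2]; ring
    · rw [affS_apply_eq3 (hc ▸ h1) (hc ▸ h2), affS_apply_eq3 h1 h2]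

lemma affS_bound (c : ZMod n) (z : ℤ) : z - 1 ≤ affS n c z ∧ affS n c z ≤ z + 1 := by
  unfold affS
  split_ifs <;> omega

lemma affS_flip (hn : 2 ≤ n) {c : ZMod n} {a b : ℤ} (hab : a < b)
    (h : affS n c b < affS n c a) : b = a + 1 ∧ (a : ZMod n) = c := by
  have hb1 := affS_bound c a
  have hb2 := affS_bound c b
  have hba : b = a + 1 := by omega
  subst hba
  refine ⟨rfl, ?_⟩
  by_contra h1
  have hcast : ((a + 1 : ℤ) : ZMod n) = (a : ZMod n) + 1 := by push_cast; ring
  by_cases h2 : (a : ZMod n) = c + 1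
  · rw [affS_apply_eq2 hn h2] at h
    by_cases h3 : ((a+1 : ℤ) : ZMod n) = c
    · rw [affS_apply_eq1 h3] at h; omega
    · have h4 : ((a+1:ℤ) : ZMod n) ≠ c + 1 := by
        rw [hcast]; intro hh
        exact h1 (by linear_combination hh)
      rw [affS_apply_eq3 h3 h4] at h; omega
  · rw [affS_apply_eq3 h1 h2] at h
    by_cases h3 : ((a+1 : ℤ) : ZMod n) = c
    · rw [affS_apply_eq1 h3] at h; omega
    · have h4 : ((a+1:ℤ) : ZMod n) ≠ c + 1 := by
        rw [hcast]; intro hh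
        exact h1 (by linear_combination hh)
      rw [affS_apply_eq3 h3 h4] at h; omega

lemma affS_mono (hn : 2 ≤ n) {c : ZMod n} {a b : ℤ} (hab : a < b)
    (hno : ¬(b = a + 1 ∧ (a : ZMod n) = c)) : affS n c a < affS n c b := by
  rcases lt_trichotomy (affS n c a) (affS n c b) with h | h | h
  · exact h
  · exact absurd (affS_inj hn c h) (by omega)
  · exact absurd (affS_flip hn hab h) hno

lemma wordFun_nil : wordFun n [] = id := rfl

lemma wordFun_cons (c : ZMod n) (M : List (ZMod n)) (z : ℤ) :
    wordFun n (c :: M) z = affS n c (wordFun n M z) := rfl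

lemma wordFun_append (A B : List (ZMod n)) (z : ℤ) :
    wordFun n (A ++ B) z = wordFun n A (wordFun n B z) := by
  induction A with
  | nil => rfl
  | cons c A ih => simp [wordFun_cons, ih]

lemma wordFun_shift (L : List (ZMod n)) (m z : ℤ) :
    wordFun n L (z + m * n) = wordFun n L z + m * n := by
  induction L with
  | nil => rfl
  | cons c L ih => simp [wordFun_cons, ih, affS_shift]

lemma wordFun_inj (hn : 2 ≤ n) (L : List (ZMod n)) : Function.Injective (wordFun n L) := by
  induction L with
  | nil => exact fun a b h => h
  | cons c L ih => exact fun a b h => ih (affS_inj hn c h)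

lemma wordFun_cast_inj (hn : 2 ≤ n) [NeZero n] (L : List (ZMod n)) {z w : ℤ}
    (h : ((wordFun n L z : ℤ) : ZMod n) = (wordFun n L w : ZMod n)) :
    (z : ZMod n) = (w : ZMod n) := by
  obtain ⟨m, hm⟩ := cast_eq_shift h
  have : wordFun n L z = wordFun n L (w + m * n) := by rw [wordFun_shift]; omega
  have := wordFun_inj hn L this
  subst this
  push_cast
  simp


lemma val_cast_eq [NeZero n] (c : ZMod n) : ((c.val : ℤ) : ZMod n) = c := by
  push_cast
  simp [ZMod.natCast_val]

lemma no_descent (hn : 2 ≤ n) (f : ℤ → ℤ) (L : List (ZMod n)) (hL : IsReducedWord n f L)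
    (D : ℕ) (hD : D < L.length) :
    wordFun n (L.take D) ((L.getD D 0).val : ℤ) <
      wordFun n (L.take D) (((L.getD D 0).val : ℤ) + 1) := by
  haveI : NeZero n := ⟨by omega⟩
  set i : ℤ := ((L.getD D 0).val : ℤ) with hi
  rcases lt_trichotomy (wordFun n (L.take D) i) (wordFun n (L.take D) (i + 1)) with h | h | h
  · exact h
  · exact absurd (wordFun_inj hn _ h) (by omega)
  exfalso
  set c2 : ZMod n := L.getD D 0 with hc2
  have casti : ((i : ℤ) : ZMod n) = c2 := val_cast_eq c2
  -- segment list and P, Q sequences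
  have hlist : ∀ k, k < D → (L.drop k).take (D - k)
      = L.getD k 0 :: ((L.drop (k + 1)).take (D - (k + 1))) := by
    intro k hk
    have hkl : k < L.length := hk.trans hD
    rw [List.drop_eq_getElem_cons hkl, List.getD_eq_getElem L 0 hkl]
    rw [show D - k = (D - (k + 1)) + 1 by omega, List.take_succ_cons]
  set P : ℕ → ℤ := fun k => wordFun n ((L.drop k).take (D - k)) i with hP
  set Q : ℕ → ℤ := fun k => wordFun n ((L.drop k).take (D - k)) (i + 1) with hQ
  have hP0 : P 0 = wordFun n (L.take D) i := by simp [hP]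
  have hQ0 : Q 0 = wordFun n (L.take D) (i + 1) := by simp [hQ]
  have hPD : P D = i := by simp [hP, wordFun]
  have hQD : Q D = i + 1 := by simp [hQ, wordFun]
  have hPrec : ∀ k, k < D → P k = affS n (L.getD k 0) (P (k + 1)) := by
    intro k hk
    rw [hP]
    simp only
    rw [hlist k hk, wordFun_cons]
  have hQrec : ∀ k, k < D → Q k = affS n (L.getD k 0) (Q (k + 1)) := by
    intro k hk
    rw [hQ]
    simp only
    rw [hlist k hk, wordFun_cons]
  have hPQne : ∀ k, P k ≠ Q k := by
    intro k hk
    have := wordFun_inj hn ((L.drop k).take (D - k)) hk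
    omega
  -- find the flip step
  have hex : ∃ k, k ≤ D ∧ P k < Q k := ⟨D, le_refl D, by omega⟩
  set k0 := Nat.find hex with hk0
  obtain ⟨hk0D, hk0PQ⟩ := Nat.find_spec hex
  rw [← hk0] at hk0D hk0PQ
  have hk0ne : k0 ≠ 0 := by
    intro h0
    rw [h0] at hk0PQ
    omega
  set k := k0 - 1 with hk
  have hkD : k < D := by omega
  have hknot : ¬ (k ≤ D ∧ P k < Q k) := Nat.find_min hex (by omega)
  have hQPk : Q k < P k := by
    have := hPQne k
    omega
  have hsucc : k + 1 = k0 := by omega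
  set c1 : ZMod n := L.getD k 0 with hc1
  have hPk : P k = affS n c1 (P k0) := by rw [hPrec k hkD, hsucc]
  have hQk : Q k = affS n c1 (Q k0) := by rw [hQrec k hkD, hsucc]
  have hflip := affS_flip hn hk0PQ (by rw [← hPk, ← hQk]; exact hQPk)
  obtain ⟨hQP1, hPc1⟩ := hflip
  -- the middle word
  set mid : List (ZMod n) := (L.drop k0).take (D - k0) with hmid
  have hMi : wordFun n mid i = P k0 := rfl
  have hMi1 : wordFun n mid (i + 1) = Q k0 := rfl
  -- commutation
  have hcomm : ∀ z, affS n c1 (wordFun n mid z) = wordFun n mid (affS n c2 z) := by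
    intro z
    by_cases h1 : (z : ZMod n) = c2
    · obtain ⟨m, hm⟩ := cast_eq_shift (h1.trans casti.symm)
      have hLHS : affS n c1 (wordFun n mid z) = P k0 + 1 + m * n := by
        rw [hm, wordFun_shift, hMi, affS_shift, affS_apply_eq1 hPc1]
      have hRHS : wordFun n mid (affS n c2 z) = Q k0 + m * n := by
        rw [hm, affS_shift, affS_apply_eq1 casti, wordFun_shift, hMi1]
      rw [hLHS, hRHS, hQP1]
    · by_cases h2 : (z : ZMod n) = c2 + 1
      · have hz : (z : ZMod n) = ((i + 1 : ℤ) : ZMod n) := by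
          rw [h2]; push_cast; rw [casti]
        obtain ⟨m, hm⟩ := cast_eq_shift hz
        have hLHS : affS n c1 (wordFun n mid z) = P k0 + m * n := by
          rw [hm, wordFun_shift, hMi1, hQP1, affS_shift,
            affS_apply_eq2 hn (by push_cast; rw [hPc1])]
          ring
        have hRHS : wordFun n mid (affS n c2 z) = P k0 + m * n := by
          rw [hm, affS_shift, affS_apply_eq2 hn (by push_cast; rw [casti])]
          rw [show i + 1 - 1 = i by ring, wordFun_shift, hMi]
        rw [hLHS, hRHS]
      · rw [affS_apply_eq3 h1 h2]
        refine affS_apply_eq3 ?_ ?_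
        · intro hc
          apply h1
          have : ((wordFun n mid z : ℤ) : ZMod n) = ((wordFun n mid i : ℤ) : ZMod n) := by
            rw [hMi, hc, hPc1]
          exact (wordFun_cast_inj hn mid this).trans casti
        · intro hc
          apply h2
          have : ((wordFun n mid z : ℤ) : ZMod n) = ((wordFun n mid (i + 1) : ℤ) : ZMod n) := by
            rw [hMi1, hQP1, hc]
            push_cast
            rw [hPc1]
          have := (wordFun_cast_inj hn mid this)
          rw [this]
          push_cast
          rw [casti]
  -- decomposition of L
  have hdecomp : L = L.take k ++ (c1 :: (mid ++ (c2 :: L.drop (D + 1)))) := by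
    have hkl : k < L.length := hkD.trans hD
    have hDl : D < L.length := hD
    conv_lhs => rw [← List.take_append_drop k L]
    congr 1
    rw [List.drop_eq_getElem_cons hkl, ← List.getD_eq_getElem L 0 hkl, ← hc1, hsucc]
    congr 1
    conv_lhs => rw [← List.take_append_drop (D - k0) (L.drop k0)]
    rw [← hmid]
    congr 1
    rw [List.drop_drop]
    rw [show k0 + (D - k0) = D by omega]
    rw [List.drop_eq_getElem_cons hDl, ← List.getD_eq_getElem L 0 hDl, ← hc2]
  -- the shorter word
  set W : List (ZMod n) := L.take k ++ (mid ++ L.drop (D + 1)) with hW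
  have hWf : wordFun n W = f := by
    rw [← hL.1]
    funext z
    conv_rhs => rw [hdecomp]
    rw [hW, wordFun_append, wordFun_append, wordFun_append, wordFun_cons, wordFun_append,
      wordFun_cons, ← hcomm, affS_invol hn]
  have hlen := hL.2 W hWf
  have h1 := congrArg List.length hdecomp
  have h2 : W.length = (L.take k).length + (mid.length + (L.drop (D + 1)).length) := by
    simp [hW]
  simp only [List.length_append, List.length_cons] at h1
  omega


end


/-- for an affine permutation `w` and a reflection order `ρ` of `Inv_2(w)`
(coming from a reduced word `L`), if `[x,y]` and `[x,y+n]` are both 2-inversions of `w`,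
then `[x,y]` appears before `[x,y+n]` in `ρ`. -/
theorem inversion_before_shifted (n : ℕ) (hn : 2 ≤ n) (f : ℤ → ℤ)
    (hf : IsAffinePerm n f) (L : List (ZMod n)) (hL : IsReducedWord n f L)
    (x y : ℤ) (hxy : x < y) (hmod : (x : ZMod n) ≠ (y : ZMod n))
    (hinv1 : ∀ a b : ℤ, f a = x → f b = y → b < a)
    (hinv2 : ∀ a b : ℤ, f a = x → f b = y + n → b < a)
    (j j' : ℕ) (hj : j < L.length) (hj' : j' < L.length)
    (hmatch1 : ∃ m : ℤ, reflEntry n L j = (x + m * n, y + m * n))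
    (hmatch2 : ∃ m : ℤ, reflEntry n L j' = (x + m * n, y + n + m * n)) :
    j < j' := by
  haveI : NeZero n := ⟨by omega⟩
  have hn2 : (2 : ℤ) ≤ (n : ℤ) := by exact_mod_cast hn
  set Inv : ℕ → Prop := fun k =>
    ∃ a b : ℤ, wordFun n (L.take k) a = x ∧ wordFun n (L.take k) b = y ∧ b < a with hInv
  -- step lemma
  have hstep : ∀ k, k < L.length → Inv k → Inv (k + 1) := by
    intro k hk ⟨a, b, hax, hby, hba⟩
    set c : ZMod n := L.getD k 0 with hc
    have htake : L.take (k + 1) = L.take k ++ [c] := by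
      rw [List.take_succ, List.getElem?_eq_getElem hk, hc, List.getD_eq_getElem L 0 hk]
      rfl
    have hw : ∀ z, wordFun n (L.take (k + 1)) z = wordFun n (L.take k) (affS n c z) := by
      intro z
      rw [htake, wordFun_append, wordFun_cons]
      rfl
    refine ⟨affS n c a, affS n c b, ?_, ?_, ?_⟩
    · rw [hw, affS_invol hn, hax]
    · rw [hw, affS_invol hn, hby]
    · refine affS_mono hn hba ?_
      rintro ⟨hab1, hbc⟩
      have hbc' : (b : ZMod n) = (((c.val : ℤ)) : ZMod n) := by rw [hbc, val_cast_eq]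
      obtain ⟨m, hm⟩ := cast_eq_shift hbc'
      have h1 : wordFun n (L.take k) ((c.val : ℤ)) = y - m * n := by
        have := wordFun_shift (n := n) (L.take k) m (c.val : ℤ)
        rw [← hm, hby] at this
        omega
      have h2 : wordFun n (L.take k) ((c.val : ℤ) + 1) = x - m * n := by
        have := wordFun_shift (n := n) (L.take k) m ((c.val : ℤ) + 1)
        rw [show (c.val : ℤ) + 1 + m * n = b + 1 by omega, ← hab1, hax] at this
        omega
      have := no_descent hn f L hL k hk
      rw [← hc, h1, h2] at this
      omega
  -- Inv j'
  obtain ⟨m', hm'⟩ := hmatch2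
  rw [reflEntry, Prod.mk.injEq] at hm'
  obtain ⟨hm'1, hm'2⟩ := hm'
  have hInvj' : Inv j' := by
    set i' : ℤ := ((L.getD j' 0).val : ℤ) with hi'
    refine ⟨i' + (-m') * n, i' + 1 + (-m' - 1) * n, ?_, ?_, by nlinarith⟩
    · rw [wordFun_shift, hm'1]; ring
    · rw [wordFun_shift, hm'2]; ring
  -- ¬ Inv j
  obtain ⟨m, hm⟩ := hmatch1
  rw [reflEntry, Prod.mk.injEq] at hm
  obtain ⟨hm1, hm2⟩ := hm
  have hnInvj : ¬ Inv j := by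
    rintro ⟨a, b, hax, hby, hba⟩
    set i : ℤ := ((L.getD j 0).val : ℤ) with hi
    have e1 : wordFun n (L.take j) (i + (-m) * n) = x := by rw [wordFun_shift, hm1]; ring
    have e2 : wordFun n (L.take j) (i + 1 + (-m) * n) = y := by rw [wordFun_shift, hm2]; ring
    have ha : a = i + (-m) * n := wordFun_inj hn _ (hax.trans e1.symm)
    have hb : b = i + 1 + (-m) * n := wordFun_inj hn _ (hby.trans e2.symm)
    omega
  -- conclude
  by_contra hcon
  push_neg at hcon
  have hmono : ∀ d, j' + d ≤ j → Inv (j' + d) := by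
    intro d
    induction d with
    | zero => intro _; exact hInvj'
    | succ d ih =>
      intro hd
      have := hstep (j' + d) (by omega) (ih (by omega))
      rwa [show j' + d + 1 = j' + (d + 1) by omega] at this
  exact hnInvj (by rw [show j = j' + (j - j') by omega]; exact hmono _ (by omega))
end

section
/- For w in S_n, the 1-admissible orders for w (total orders of [n] such that for every 2-inversion [i,j] of w the restriction to {i,j} may be in either order, and for every 2-quasi-inversion [i,j] of w the element i precedes j) are in bijection with the permutations v in the weak order interval [id, w], via sending v to the total order v(1), v(2), ..., v(n) read as a sequence. -/
/-- `v ≤ w` in the (right) weak order: `Inv_2(v) ⊆ Inv_2(w)`. -/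
def WeakLE (n : ℕ) (v w : Equiv.Perm (Fin n)) : Prop :=
  ∀ i j : Fin n, i < j → v⁻¹ j < v⁻¹ i → w⁻¹ j < w⁻¹ i

/-- A total order of `[n]`, recorded as the listing `σ(1), …, σ(n)` of a permutation `σ`,
is 1-admissible for `w` if `i` precedes `j` (i.e. `σ⁻¹ i < σ⁻¹ j`) whenever `[i,j]` is a
2-quasi-inversion of `w` (`i < j` and `w⁻¹ i < w⁻¹ j`); for 2-inversions of `w` either
order is allowed. -/
def IsOneAdmissible (n : ℕ) (w σ : Equiv.Perm (Fin n)) : Prop :=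
  ∀ i j : Fin n, i < j → w⁻¹ i < w⁻¹ j → σ⁻¹ i < σ⁻¹ j

/-- the 1-admissible orders for `w` are in bijection with the permutations
`v` in the weak order interval `[id, w]`, via sending `v` to the total order
`v(1), v(2), …, v(n)`. -/
theorem oneAdmissible_bijection (n : ℕ) (w : Equiv.Perm (Fin n)) :
    Set.BijOn (fun v : Equiv.Perm (Fin n) => v)
      {v | WeakLE n v w} {σ | IsOneAdmissible n w σ} := by
  have hset : {v : Equiv.Perm (Fin n) | WeakLE n v w}
      = {σ | IsOneAdmissible n w σ} := by
    ext v
    simp only [Set.mem_setOf_eq]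
    constructor
    · intro h i j hij hw
      rcases lt_trichotomy (v⁻¹ i) (v⁻¹ j) with hlt | heq | hgt
      · exact hlt
      · exact absurd (v⁻¹.injective heq) hij.ne
      · exact absurd (h i j hij hgt) hw.asymm
    · intro h i j hij hv
      rcases lt_trichotomy (w⁻¹ j) (w⁻¹ i) with hlt | heq | hgt
      · exact hlt
      · exact absurd (w⁻¹.injective heq) hij.ne'
      · exact absurd (h i j hij hgt) hv.asymm
  rw [hset]
  exact Set.bijOn_id _
end

section
/- For w in S_n, a permutation v satisfies v ≤ w in the weak order (Inv_2(v) ⊆ Inv_2(w)) if and only if the total order on [n] given by the one-line notation of v is a linear extension of the partial order on [n] generated by the relations i < j whenever i < j in Z and w^{-1}(i) < w^{-1}(j). -/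
/-- `v ≤ w` in the weak order (`Inv_2(v) ⊆ Inv_2(w)`) iff the one-line
order of `v` is a linear extension of the partial order on `[n]` generated by the
relations `i < j` whenever `i < j` (in `ℤ`) and `w⁻¹(i) < w⁻¹(j)`. -/
theorem weakOrder_iff_linearExtension (n : ℕ) (v w : Equiv.Perm (Fin n)) :
    (∀ i j : Fin n, i < j → v⁻¹ j < v⁻¹ i → w⁻¹ j < w⁻¹ i) ↔
    (∀ i j : Fin n,
      Relation.TransGen (fun a b : Fin n => a < b ∧ w⁻¹ a < w⁻¹ b) i j →
        v⁻¹ i < v⁻¹ j) := by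
  constructor
  · intro h i j hij
    induction hij with
    | single hab =>
      rename_i b
      rcases hab with ⟨hlt, hw⟩
      rcases lt_or_ge (v⁻¹ i) (v⁻¹ b) with h1 | h1
      · exact h1
      · exfalso
        have hne : v⁻¹ b ≠ v⁻¹ i := fun e => (ne_of_lt hlt) (v⁻¹.injective e).symm
        exact absurd (h i b hlt (lt_of_le_of_ne h1 hne)) (not_lt.mpr hw.le)
    | tail _ hab ih =>
      rename_i b c _
      rcases hab with ⟨hlt, hw⟩
      refine lt_trans ih ?_
      rcases lt_or_ge (v⁻¹ b) (v⁻¹ c) with h1 | h1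
      · exact h1
      · exfalso
        have hne : v⁻¹ c ≠ v⁻¹ b := fun e => (ne_of_lt hlt) (v⁻¹.injective e).symm
        exact absurd (h b c hlt (lt_of_le_of_ne h1 hne)) (not_lt.mpr hw.le)
  · intro h i j hij hv
    by_contra hw
    push_neg at hw
    have hne : w⁻¹ i ≠ w⁻¹ j := fun e => (ne_of_lt hij) (w⁻¹.injective e)
    have : v⁻¹ i < v⁻¹ j := h i j (Relation.TransGen.single ⟨hij, lt_of_le_of_ne hw hne⟩)
    exact absurd hv (not_lt.mpr this.le)
end

section
/- For w in S_n and ρ a k-admissible order of Inv_k(w), the reversal set Rev(ρ) = {X ∈ Inv_{k+1}(w) : ρ restricted to P(X) is in antilex order (X_1, X_2, ..., X_{k+1})} is a lower order ideal of the permanent poset P_w(n,k+1). -/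
/-- A total order of `Inv_k(w)`, recorded as a duplicate-free list enumerating it. -/
def IsOrderOf (n k : ℕ) (w : Equiv.Perm (Fin n)) (L : List (Fin k → Fin n)) : Prop :=
  L.Nodup ∧ ∀ A : Fin k → Fin n, A ∈ L ↔ IsKInv n k w A

/-- The restriction of the order `L` to the packet `P(X)` is the lex order
`(X_{k+1}, …, X_1)`. -/
def LexAt (n k : ℕ) (L : List (Fin k → Fin n)) (X : Fin (k + 1) → Fin n) : Prop :=
  ∀ i j : Fin (k + 1), i < j →
    L.idxOf (X ∘ Fin.succAbove j) < L.idxOf (X ∘ Fin.succAbove i)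

/-- The restriction of the order `L` to the packet `P(X)` is the antilex order
`(X_1, …, X_{k+1})`. -/
def AntilexAt (n k : ℕ) (L : List (Fin k → Fin n)) (X : Fin (k + 1) → Fin n) : Prop :=
  ∀ i j : Fin (k + 1), i < j →
    L.idxOf (X ∘ Fin.succAbove i) < L.idxOf (X ∘ Fin.succAbove j)

/-- `L` is a `k`-admissible order for `w`: a linear extension of the permanent poset
`P_w(n,k)` whose restriction to each packet `P(X)`, `X ∈ Inv_{k+1}(w)`, is lex or antilex. -/
def IsAdmissible (n k : ℕ) (w : Equiv.Perm (Fin n)) (L : List (Fin k → Fin n)) : Prop :=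
  IsOrderOf n k w L ∧
  (∀ A B : Fin k → Fin n, Relation.TransGen (QuasiRel n k w) A B →
    L.idxOf A < L.idxOf B) ∧
  (∀ X : Fin (k + 1) → Fin n, IsKInv n (k + 1) w X →
    (LexAt n k L X ∨ AntilexAt n k L X))

/-- The reversal set of the admissible order `L`: the `(k+1)`-inversions whose packet
appears in antilex order in `L`. -/
def RevSet (n k : ℕ) (w : Equiv.Perm (Fin n)) (L : List (Fin k → Fin n)) :
    Set (Fin (k + 1) → Fin n) :=
  {X | IsKInv n (k + 1) w X ∧ AntilexAt n k L X}

section Aux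
variable {n k : ℕ}

lemma val_succAbove {m : ℕ} (p : Fin (m + 1)) (i : Fin m) :
    (p.succAbove i).val = if i.val < p.val then i.val else i.val + 1 := by
  rw [Fin.succAbove]
  rcases lt_or_ge i.val p.val with h | h
  · rw [if_pos (by simpa [Fin.lt_def] using h), if_pos h, Fin.coe_castSucc]
  · rw [if_neg (by simp [Fin.lt_def]; omega), if_neg (by omega), Fin.val_succ]

lemma facet_iff {m : ℕ} (w : Equiv.Perm (Fin n)) (Z : Fin (m + 1) → Fin n)
    (hZ : StrictMono Z) (q : Fin m)
    (hnon : ¬ w⁻¹ (Z q.succ) < w⁻¹ (Z q.castSucc))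
    (hinv : ∀ a b : Fin (m + 1), a < b → ¬(a = q.castSucc ∧ b = q.succ) →
      w⁻¹ (Z b) < w⁻¹ (Z a)) :
    ∀ j : Fin (m + 1), IsKInv n m w (Z ∘ Fin.succAbove j) ↔ (j = q.castSucc ∨ j = q.succ) := by
  intro j
  constructor
  · intro hI
    by_contra hne
    push_neg at hne
    obtain ⟨a, ha⟩ := Fin.exists_succAbove_eq (Ne.symm hne.1)
    obtain ⟨b, hb⟩ := Fin.exists_succAbove_eq (Ne.symm hne.2)
    have hab : a < b := by
      have h := (Fin.castSucc_lt_succ : q.castSucc < q.succ)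
      rw [← ha, ← hb] at h
      exact (Fin.strictMono_succAbove j).lt_iff_lt.mp h
    have h2 := hI.2 a b hab
    simp only [Function.comp_apply, ha, hb] at h2
    exact hnon h2
  · rintro (rfl | rfl) <;>
      refine ⟨hZ.comp (Fin.strictMono_succAbove _), fun a b hab => ?_⟩
    · exact hinv _ _ ((Fin.strictMono_succAbove _).lt_iff_lt.mpr hab)
        (fun hc => Fin.succAbove_ne _ a hc.1)
    · exact hinv _ _ ((Fin.strictMono_succAbove _).lt_iff_lt.mpr hab)
        (fun hc => Fin.succAbove_ne _ b hc.2)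

lemma quasi_of {m : ℕ} (w : Equiv.Perm (Fin n)) (Z : Fin (m + 1) → Fin n)
    (hZ : StrictMono Z) (q : Fin m)
    (hnon : ¬ w⁻¹ (Z q.succ) < w⁻¹ (Z q.castSucc))
    (hinv : ∀ a b : Fin (m + 1), a < b → ¬(a = q.castSucc ∧ b = q.succ) →
      w⁻¹ (Z b) < w⁻¹ (Z a)) :
    IsKQuasiInv n (m + 1) w Z := by
  refine ⟨hZ, ⟨(q.castSucc, q.succ), ⟨(Fin.castSucc_lt_succ : q.castSucc < q.succ), hnon⟩, ?_⟩⟩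
  rintro ⟨a, b⟩ ⟨hab, hni⟩
  by_contra hne
  exact hni (hinv a b hab (fun hc => hne (by simp [Prod.ext_iff, hc.1, hc.2])))

lemma extract {m : ℕ} (w : Equiv.Perm (Fin n)) (Z : Fin (m + 1 + 1) → Fin n) (q : Fin (m + 1))
    (hQ : IsKQuasiInv n (m + 1 + 1) w Z)
    (hfac : ∀ j : Fin (m + 1 + 1), IsKInv n (m + 1) w (Z ∘ Fin.succAbove j) ↔
      (j = q.castSucc ∨ j = q.succ)) :
    (¬ w⁻¹ (Z q.succ) < w⁻¹ (Z q.castSucc)) ∧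
    (∀ a b : Fin (m + 1 + 1), a < b → ¬(a = q.castSucc ∧ b = q.succ) →
      w⁻¹ (Z b) < w⁻¹ (Z a)) := by
  obtain ⟨hsm, p, ⟨hplt, hpnon⟩, huniq⟩ := hQ
  have hinv0 : ∀ a b : Fin (m + 1 + 1), a < b → ¬(a = p.1 ∧ b = p.2) →
      w⁻¹ (Z b) < w⁻¹ (Z a) := by
    intro a b hab hne
    by_contra h
    have h2 := huniq (a, b) ⟨hab, h⟩
    exact hne ⟨congrArg Prod.fst h2, congrArg Prod.snd h2⟩
  have hfacp : ∀ j : Fin (m + 1 + 1), (j = p.1 ∨ j = p.2) →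
      IsKInv n (m + 1) w (Z ∘ Fin.succAbove j) := by
    rintro j (rfl | rfl) <;>
      refine ⟨hsm.comp (Fin.strictMono_succAbove _), fun a b hab => ?_⟩
    · exact hinv0 _ _ ((Fin.strictMono_succAbove _).lt_iff_lt.mpr hab)
        (fun hc => Fin.succAbove_ne _ a hc.1)
    · exact hinv0 _ _ ((Fin.strictMono_succAbove _).lt_iff_lt.mpr hab)
        (fun hc => Fin.succAbove_ne _ b hc.2)
  have h1 := (hfac p.1).mp (hfacp p.1 (Or.inl rfl))
  have h2 := (hfac p.2).mp (hfacp p.2 (Or.inr rfl))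
  have hqlt := (Fin.castSucc_lt_succ : q.castSucc < q.succ)
  have hp : p.1 = q.castSucc ∧ p.2 = q.succ := by
    rcases h1 with h1 | h1 <;> rcases h2 with h2 | h2
    · rw [h1, h2] at hplt; exact absurd hplt (lt_irrefl _)
    · exact ⟨h1, h2⟩
    · rw [h1, h2] at hplt; exact absurd hqlt (lt_asymm hplt)
    · rw [h1, h2] at hplt; exact absurd hplt (lt_irrefl _)
  rw [hp.1, hp.2] at hpnon
  simp only [hp.1, hp.2] at hinv0
  exact ⟨hpnon, hinv0⟩

end Aux

section Aux2
variable {n k : ℕ}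

lemma shared_idx (i : Fin (k + 1)) (m : Fin k) :
    (Fin.succAbove i.castSucc) (Fin.succAbove i m)
      = (Fin.succAbove i.succ) (Fin.succAbove i m) := by
  have hm := m.isLt
  apply Fin.ext
  simp only [val_succAbove, Fin.coe_castSucc, Fin.val_succ]
  split_ifs <;> omega

lemma cross (w : Equiv.Perm (Fin n)) (L : List (Fin k → Fin n)) (hL : IsAdmissible n k w L)
    (X : Fin (k + 1 + 1) → Fin n) (i : Fin (k + 1)) (j : Fin k)
    (hsm : StrictMono X)
    (hnon : ¬ w⁻¹ (X i.succ) < w⁻¹ (X i.castSucc))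
    (hinv : ∀ a b : Fin (k + 1 + 1), a < b → ¬(a = i.castSucc ∧ b = i.succ) →
      w⁻¹ (X b) < w⁻¹ (X a))
    (e : Fin (k + 1) → Fin (k + 1 + 1)) (he : StrictMono e)
    (hec : e j.castSucc = i.castSucc) (hes : e j.succ = i.succ) :
    (Odd (k - (j.1 + 1)) ∧
      L.idxOf ((X ∘ e) ∘ Fin.succAbove j.castSucc)
        < L.idxOf ((X ∘ e) ∘ Fin.succAbove j.succ)) ∨
    (Even (k - (j.1 + 1)) ∧
      L.idxOf ((X ∘ e) ∘ Fin.succAbove j.succ)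
        < L.idxOf ((X ∘ e) ∘ Fin.succAbove j.castSucc)) := by
  have hZ : StrictMono (X ∘ e) := hsm.comp he
  have hnonZ : ¬ w⁻¹ ((X ∘ e) j.succ) < w⁻¹ ((X ∘ e) j.castSucc) := by
    simpa only [Function.comp_apply, hec, hes] using hnon
  have hinvZ : ∀ a b : Fin (k + 1), a < b → ¬(a = j.castSucc ∧ b = j.succ) →
      w⁻¹ ((X ∘ e) b) < w⁻¹ ((X ∘ e) a) := by
    intro a b hab hne
    refine hinv (e a) (e b) (he hab) ?_
    rintro ⟨h1, h2⟩
    exact hne ⟨he.injective (h1.trans hec.symm), he.injective (h2.trans hes.symm)⟩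
  have hq : IsKQuasiInv n (k + 1) w (X ∘ e) := quasi_of w (X ∘ e) hZ j hnonZ hinvZ
  have hf := facet_iff w (X ∘ e) hZ j hnonZ hinvZ
  rcases Nat.even_or_odd (k - (j.1 + 1)) with hpar | hpar
  · exact Or.inr ⟨hpar, hL.2.1 _ _ (Relation.TransGen.single
      ⟨X ∘ e, j, hq, hf, Or.inr ⟨hpar, rfl, rfl⟩⟩)⟩
  · exact Or.inl ⟨hpar, hL.2.1 _ _ (Relation.TransGen.single
      ⟨X ∘ e, j, hq, hf, Or.inl ⟨hpar, rfl, rfl⟩⟩)⟩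

end Aux2

section Aux3
variable {n k : ℕ}

lemma step (w : Equiv.Perm (Fin n)) (L : List (Fin k → Fin n))
    (hL : IsAdmissible n k w L) (A C : Fin (k + 1) → Fin n)
    (h : QuasiRel n (k + 1) w A C) (hC : C ∈ RevSet n k w L) : A ∈ RevSet n k w L := by
  obtain ⟨X, i, hXq, hfac, hpar⟩ := h
  have hsm : StrictMono X := hXq.1
  obtain ⟨hnon, hinv⟩ := extract w X i hXq hfac
  have hAinv : IsKInv n (k + 1) w A := by
    rcases hpar with ⟨_, hA, _⟩ | ⟨_, hA, _⟩
    · rw [hA]; exact (hfac _).mpr (Or.inl rfl)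
    · rw [hA]; exact (hfac _).mpr (Or.inr rfl)
  rcases Nat.eq_zero_or_pos k with rfl | hk
  · exact ⟨hAinv, fun a b hab =>
      absurd (Fin.ext (by have := a.isLt; have := b.isLt; omega)) hab.ne⟩
  rcases hL.2.2 A hAinv with hlex | hanti
  swap
  · exact ⟨hAinv, hanti⟩
  exfalso
  obtain ⟨hCinv, hanti⟩ := hC
  have eS : (X ∘ Fin.succAbove i.castSucc) ∘ Fin.succAbove i
      = (X ∘ Fin.succAbove i.succ) ∘ Fin.succAbove i := by
    funext m
    simp only [Function.comp_apply]
    exact congrArg X (shared_idx i m)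
  rcases hpar with ⟨hodd, hA, hCeq⟩ | ⟨heven, hA, hCeq⟩
  · -- A = ℓ (lex), C = u (antilex)
    subst hA; subst hCeq
    have hodd' : Odd (k - i.1) := by
      rcases hodd with ⟨t, ht⟩; exact ⟨t, by omega⟩
    rcases Fin.eq_zero_or_eq_succ i with rfl | ⟨j, rfl⟩
    · -- i = 0 : use e = castSucc, position last
      have hj0 : (⟨0, hk⟩ : Fin k).1 = 0 := rfl
      have hec : Fin.castSucc (⟨0, hk⟩ : Fin k).castSucc = (0 : Fin (k + 1)).castSucc := by
        apply Fin.ext; simp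
      have hes : Fin.castSucc (⟨0, hk⟩ : Fin k).succ = (0 : Fin (k + 1)).succ := by
        apply Fin.ext; simp
      have hcross := cross w L hL X 0 ⟨0, hk⟩ hsm hnon hinv
        Fin.castSucc Fin.strictMono_castSucc hec hes
      rw [Fin.val_zero] at hodd'
      have hev : Even (k - ((⟨0, hk⟩ : Fin k).1 + 1)) := by
        rcases hodd' with ⟨t, ht⟩; exact ⟨t, by omega⟩
      rcases hcross with ⟨hp, _⟩ | ⟨_, hlt⟩
      · rw [Nat.odd_iff] at hp; rcases hev with ⟨t, ht⟩; omega
      have e1 : (X ∘ Fin.castSucc) ∘ Fin.succAbove (⟨0, hk⟩ : Fin k).castSucc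
          = (X ∘ Fin.succAbove (0 : Fin (k + 1)).castSucc) ∘ Fin.succAbove (Fin.last k) := by
        funext m
        have hm := m.isLt
        simp only [Function.comp_apply]
        congr 1
        apply Fin.ext
        simp only [val_succAbove, Fin.coe_castSucc, Fin.val_succ, Fin.val_last, Fin.val_zero]
        split_ifs <;> omega
      have e4 : (X ∘ Fin.castSucc) ∘ Fin.succAbove (⟨0, hk⟩ : Fin k).succ
          = (X ∘ Fin.succAbove (0 : Fin (k + 1)).succ) ∘ Fin.succAbove (Fin.last k) := by
        funext m
        have hm := m.isLt
        simp only [Function.comp_apply]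
        congr 1
        apply Fin.ext
        simp only [val_succAbove, Fin.coe_castSucc, Fin.val_succ, Fin.val_last, Fin.val_zero]
        split_ifs <;> omega
      rw [e1, e4] at hlt
      have h0last : (0 : Fin (k + 1)) < Fin.last k := by
        rw [Fin.lt_def, Fin.val_zero, Fin.val_last]; exact hk
      have h2 := hanti 0 (Fin.last k) h0last
      have h3 := hlex 0 (Fin.last k) h0last
      rw [eS] at h3
      exact lt_irrefl _ (h2.trans (hlt.trans h3))
    · -- i = j.succ : use e = succ, position 0
      have hec : Fin.succ j.castSucc = (j.succ).castSucc := Fin.succ_castSucc j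
      have hes : Fin.succ j.succ = (j.succ).succ := rfl
      have hcross := cross w L hL X j.succ j hsm hnon hinv
        Fin.succ Fin.strictMono_succ hec hes
      rw [Fin.val_succ] at hodd'
      rcases hcross with ⟨_, hlt⟩ | ⟨hp, _⟩
      swap
      · rcases hp with ⟨t, ht⟩; rw [Nat.odd_iff] at hodd'; omega
      have e2 : (X ∘ Fin.succ) ∘ Fin.succAbove j.castSucc
          = (X ∘ Fin.succAbove (j.succ).castSucc) ∘ Fin.succAbove (0 : Fin (k + 1)) := by
        funext m
        have hm := m.isLt
        simp only [Function.comp_apply]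
        congr 1
        apply Fin.ext
        simp only [val_succAbove, Fin.coe_castSucc, Fin.val_succ, Fin.val_zero, Nat.not_lt_zero, if_false]
        split_ifs <;> omega
      have e3 : (X ∘ Fin.succ) ∘ Fin.succAbove j.succ
          = (X ∘ Fin.succAbove (j.succ).succ) ∘ Fin.succAbove (0 : Fin (k + 1)) := by
        funext m
        have hm := m.isLt
        simp only [Function.comp_apply]
        congr 1
        apply Fin.ext
        simp only [val_succAbove, Fin.coe_castSucc, Fin.val_succ, Fin.val_zero, Nat.not_lt_zero, if_false]
        split_ifs <;> omega
      rw [e2, e3] at hlt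
      have h2 := hanti 0 j.succ (Fin.succ_pos j)
      have h3 := hlex 0 j.succ (Fin.succ_pos j)
      rw [eS] at h3
      exact lt_irrefl _ (hlt.trans (h2.trans h3))
  · -- A = u (lex), C = ℓ (antilex)
    subst hA; subst hCeq
    have heven' : Even (k - i.1) := by
      rcases heven with ⟨t, ht⟩; exact ⟨t, by omega⟩
    rcases Fin.eq_zero_or_eq_succ i with rfl | ⟨j, rfl⟩
    · -- i = 0 : use e = castSucc, position last
      have hj0 : (⟨0, hk⟩ : Fin k).1 = 0 := rfl
      have hec : Fin.castSucc (⟨0, hk⟩ : Fin k).castSucc = (0 : Fin (k + 1)).castSucc := by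
        apply Fin.ext; simp
      have hes : Fin.castSucc (⟨0, hk⟩ : Fin k).succ = (0 : Fin (k + 1)).succ := by
        apply Fin.ext; simp
      have hcross := cross w L hL X 0 ⟨0, hk⟩ hsm hnon hinv
        Fin.castSucc Fin.strictMono_castSucc hec hes
      rw [Fin.val_zero] at heven'
      have hoddj : Odd (k - ((⟨0, hk⟩ : Fin k).1 + 1)) := by
        rcases heven' with ⟨t, ht⟩; exact ⟨t - 1, by omega⟩
      rcases hcross with ⟨_, hlt⟩ | ⟨hp, _⟩
      swap
      · rcases hp with ⟨t, ht⟩; rw [Nat.odd_iff] at hoddj; omega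
      have e1 : (X ∘ Fin.castSucc) ∘ Fin.succAbove (⟨0, hk⟩ : Fin k).castSucc
          = (X ∘ Fin.succAbove (0 : Fin (k + 1)).castSucc) ∘ Fin.succAbove (Fin.last k) := by
        funext m
        have hm := m.isLt
        simp only [Function.comp_apply]
        congr 1
        apply Fin.ext
        simp only [val_succAbove, Fin.coe_castSucc, Fin.val_succ, Fin.val_last, Fin.val_zero]
        split_ifs <;> omega
      have e4 : (X ∘ Fin.castSucc) ∘ Fin.succAbove (⟨0, hk⟩ : Fin k).succ
          = (X ∘ Fin.succAbove (0 : Fin (k + 1)).succ) ∘ Fin.succAbove (Fin.last k) := by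
        funext m
        have hm := m.isLt
        simp only [Function.comp_apply]
        congr 1
        apply Fin.ext
        simp only [val_succAbove, Fin.coe_castSucc, Fin.val_succ, Fin.val_last, Fin.val_zero]
        split_ifs <;> omega
      rw [e1, e4] at hlt
      have h0last : (0 : Fin (k + 1)) < Fin.last k := by
        rw [Fin.lt_def, Fin.val_zero, Fin.val_last]; exact hk
      have h2 := hanti 0 (Fin.last k) h0last
      have h3 := hlex 0 (Fin.last k) h0last
      rw [← eS] at h3
      exact lt_irrefl _ (h2.trans (hlt.trans h3))
    · -- i = j.succ : use e = succ, position 0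
      have hec : Fin.succ j.castSucc = (j.succ).castSucc := Fin.succ_castSucc j
      have hes : Fin.succ j.succ = (j.succ).succ := rfl
      have hcross := cross w L hL X j.succ j hsm hnon hinv
        Fin.succ Fin.strictMono_succ hec hes
      rw [Fin.val_succ] at heven'
      rcases hcross with ⟨hp, _⟩ | ⟨_, hlt⟩
      · rcases heven' with ⟨t, ht⟩; rw [Nat.odd_iff] at hp; omega
      have e2 : (X ∘ Fin.succ) ∘ Fin.succAbove j.castSucc
          = (X ∘ Fin.succAbove (j.succ).castSucc) ∘ Fin.succAbove (0 : Fin (k + 1)) := by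
        funext m
        have hm := m.isLt
        simp only [Function.comp_apply]
        congr 1
        apply Fin.ext
        simp only [val_succAbove, Fin.coe_castSucc, Fin.val_succ, Fin.val_zero, Nat.not_lt_zero, if_false]
        split_ifs <;> omega
      have e3 : (X ∘ Fin.succ) ∘ Fin.succAbove j.succ
          = (X ∘ Fin.succAbove (j.succ).succ) ∘ Fin.succAbove (0 : Fin (k + 1)) := by
        funext m
        have hm := m.isLt
        simp only [Function.comp_apply]
        congr 1
        apply Fin.ext
        simp only [val_succAbove, Fin.coe_castSucc, Fin.val_succ, Fin.val_zero, Nat.not_lt_zero, if_false]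
        split_ifs <;> omega
      rw [e2, e3] at hlt
      have h2 := hanti 0 j.succ (Fin.succ_pos j)
      have h3 := hlex 0 j.succ (Fin.succ_pos j)
      rw [eS] at h2
      exact lt_irrefl _ (hlt.trans (h2.trans h3))

end Aux3


/-- the reversal set of a `k`-admissible order `L` for `w` is a lower order
ideal of the permanent poset `P_w(n,k+1)`. -/
theorem revSet_isOrderIdeal (n k : ℕ) (w : Equiv.Perm (Fin n))
    (L : List (Fin k → Fin n)) (hL : IsAdmissible n k w L) :
    ∀ A B : Fin (k + 1) → Fin n, IsKInv n (k + 1) w A → B ∈ RevSet n k w L →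
      Relation.ReflTransGen (QuasiRel n (k + 1) w) A B → A ∈ RevSet n k w L := by
  intro A B hA hB h
  clear hA
  induction h using Relation.ReflTransGen.head_induction_on with
  | refl => exact hB
  | head hrel _ ih => exact step w L hL _ _ hrel ih
end

section
/- For w in S_n, if two k-admissible orders ρ and σ of Inv_k(w) are commutation equivalent (differ by a sequence of swaps of adjacent elements that are incomparable in the permanent poset and do not lie in a common packet of a (k+1)-inversion), then they have equal reversal sets: Rev(ρ) = Rev(σ). -/
/-- `A` and `B` commute with respect to `w`: they are incomparable in the permanent poset
`P_w(n,k)` and do not both lie in the packet of a common `(k+1)`-inversion. -/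
def CommutesWith (n k : ℕ) (w : Equiv.Perm (Fin n)) (A B : Fin k → Fin n) : Prop :=
  ¬ Relation.TransGen (QuasiRel n k w) A B ∧
  ¬ Relation.TransGen (QuasiRel n k w) B A ∧
  ¬ ∃ (Z : Fin (k + 1) → Fin n) (i j : Fin (k + 1)),
      IsKInv n (k + 1) w Z ∧ A = Z ∘ Fin.succAbove i ∧ B = Z ∘ Fin.succAbove j

/-- One commutation move: swap two adjacent elements of the list that commute w.r.t. `w`. -/
def CommStep (n k : ℕ) (w : Equiv.Perm (Fin n)) (L M : List (Fin k → Fin n)) : Prop :=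
  ∃ (p r : List (Fin k → Fin n)) (A B : Fin k → Fin n),
    CommutesWith n k w A B ∧ L = p ++ A :: B :: r ∧ M = p ++ B :: A :: r


section Aux

variable {α : Type*} [DecidableEq α]

lemma idx_mid (p r : List α) (x y E : α) :
    List.idxOf E (p ++ x :: y :: r) =
      if E ∈ p then List.idxOf E p
      else if E = x then p.length
      else if E = y then p.length + 1
      else p.length + 2 + List.idxOf E r := by
  by_cases hp : E ∈ p
  · simp [hp, List.idxOf_append_of_mem hp]
  · rw [List.idxOf_append_of_notMem hp]
    by_cases hx : E = x
    · subst hx; simp [hp, List.idxOf_cons_self]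
    · rw [List.idxOf_cons_ne _ (by exact fun h => hx h.symm)]
      by_cases hy : E = y
      · subst hy; simp [hp, hx, List.idxOf_cons_self]
      · rw [List.idxOf_cons_ne _ (by exact fun h => hy h.symm)]
        simp [hp, hx, hy]
        omega

lemma swap_idx_iff (p r : List α) (A B C D : α) (hAB : A ≠ B)
    (h1 : ¬(C = A ∧ D = B)) (h2 : ¬(C = B ∧ D = A)) :
    List.idxOf C (p ++ B :: A :: r) < List.idxOf D (p ++ B :: A :: r) ↔
      List.idxOf C (p ++ A :: B :: r) < List.idxOf D (p ++ A :: B :: r) := by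
  have hC1 := idx_mid p r A B C
  have hC2 := idx_mid p r B A C
  have hD1 := idx_mid p r A B D
  have hD2 := idx_mid p r B A D
  have hCp : C ∈ p → List.idxOf C p < p.length := fun h => List.idxOf_lt_length_iff.2 h
  have hDp : D ∈ p → List.idxOf D p < p.length := fun h => List.idxOf_lt_length_iff.2 h
  by_cases hCmem : C ∈ p <;> by_cases hDmem : D ∈ p <;>
    by_cases hCA : C = A <;> by_cases hCB : C = B <;>
    by_cases hDA : D = A <;> by_cases hDB : D = B <;>
    simp_all <;> omega

end Aux

/-- commutation equivalent `k`-admissible orders have equal reversal sets. -/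
theorem commEquiv_revSet_eq (n k : ℕ) (w : Equiv.Perm (Fin n))
    (L M : List (Fin k → Fin n)) (hL : IsAdmissible n k w L) (hM : IsAdmissible n k w M)
    (h : Relation.ReflTransGen (CommStep n k w) L M) :
    RevSet n k w L = RevSet n k w M := by
  clear hL hM
  induction h with
  | refl => rfl
  | tail _ hstep ih =>
    rw [ih]
    obtain ⟨p, r, A, B, hcomm, rfl, rfl⟩ := hstep
    by_cases hAB : A = B
    · subst hAB; rfl
    · ext X
      simp only [RevSet, Set.mem_setOf_eq, and_congr_right_iff]
      intro hX
      have key : ∀ i j : Fin (k + 1),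
          List.idxOf (X ∘ Fin.succAbove i) (p ++ B :: A :: r) <
            List.idxOf (X ∘ Fin.succAbove j) (p ++ B :: A :: r) ↔
          List.idxOf (X ∘ Fin.succAbove i) (p ++ A :: B :: r) <
            List.idxOf (X ∘ Fin.succAbove j) (p ++ A :: B :: r) := by
        intro i j
        apply swap_idx_iff _ _ _ _ _ _ hAB
        · rintro ⟨h1, h2⟩
          exact hcomm.2.2 ⟨X, i, j, hX, h1.symm, h2.symm⟩
        · rintro ⟨h1, h2⟩
          exact hcomm.2.2 ⟨X, j, i, hX, h2.symm, h1.symm⟩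
      constructor
      · intro hA i j hij
        exact (key i j).2 (hA i j hij)
      · intro hA i j hij
        exact (key i j).1 (hA i j hij)
end
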